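/- Let R = ℤ/4ℤ, let f be a nilpotent element of R[x], let β be the R-automorphism of R[x] defined by β(x) = -x + 1 + f, and let y = x·(-x + 1). If β has order 2 (equivalently, f ∈ R[y]), then the ring of invariants R[x]^⟨β⟩ equals R[y + x·f], the R-subalgebra generated by the single element y + x·f. -/

import Mathlib

open Polynomial

lemma two_dvd_four : (2:ℕ) ∣ 4 := by norm_num

noncomputable abbrev piQ : (ZMod 4)[X] →+* (ZMod 2)[X] :=
  Polynomial.mapRingHom (ZMod.castHom two_dvd_four (ZMod 2))

lemma zmod_key : ∀ a : ZMod 4, (ZMod.castHom two_dvd_four (ZMod 2)) a = 0 ↔ 2 * a = 0 := by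
  decide

lemma pi_zero_iff (t : (ZMod 4)[X]) : piQ t = 0 ↔ 2 * t = 0 := by
  have h2 : (2 : (ZMod 4)[X]) = C 2 := (map_ofNat C 2).symm
  simp only [piQ, Polynomial.ext_iff, coe_mapRingHom, coeff_map, coeff_zero, h2, coeff_C_mul]
  exact forall_congr' fun n => zmod_key _

lemma pi_ker (t : (ZMod 4)[X]) (h : piQ t = 0) : ∃ u, t = 2 * u := by
  have hker : RingHom.ker (ZMod.castHom two_dvd_four (ZMod 2)) =
      Ideal.span {(2 : ZMod 4)} := by
    ext a
    simp only [RingHom.mem_ker, Ideal.mem_span_singleton, dvd_def]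
    revert a; decide
  have h1 : t ∈ RingHom.ker (Polynomial.mapRingHom (ZMod.castHom two_dvd_four (ZMod 2))) := h
  rw [Polynomial.ker_mapRingHom, hker, Ideal.map_span] at h1
  simp only [Set.image_singleton, Ideal.mem_span_singleton] at h1
  obtain ⟨u, hu⟩ := h1
  exact ⟨u, by rw [hu, map_ofNat]⟩

lemma z_monic : Monic ((X:(ZMod 2)[X])^2 + X) :=
  (monic_X_pow 2).add_of_left (by simpa using degree_X_lt_degree_X_pow (by norm_num))

lemma poly2_two : (2:(ZMod 2)[X]) = 0 := by
  rw [← map_ofNat (C : ZMod 2 →+* _) 2, show (2:ZMod 2) = 0 by decide, map_zero]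

lemma z_comp : ((X:(ZMod 2)[X])^2 + X).comp (X+1) = X^2 + X := by
  have h3 : (3:(ZMod 2)[X]) = 1 := by
    rw [← map_ofNat (C : ZMod 2 →+* _) 3, show (3:ZMod 2) = 1 by decide, map_one]
  simp only [add_comp, pow_comp, X_comp]
  ring_nf
  rw [h3, poly2_two] <;> ring_nf

lemma z_degree : ((X:(ZMod 2)[X])^2 + X).degree = 2 := by
  rw [degree_add_eq_left_of_degree_lt] <;>
    simp [degree_X_pow]

lemma fixed2 (q : (ZMod 2)[X]) (hq : q.comp (X+1) = q) :
    q ∈ Algebra.adjoin (ZMod 2) ({X^2+X} : Set ((ZMod 2)[X])) := by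
  set z : (ZMod 2)[X] := X^2 + X with hz
  generalize hn : q.natDegree = n
  induction n using Nat.strong_induction_on generalizing q with
  | _ n ih =>
    have hdiv : q %ₘ z + z * (q /ₘ z) = q := modByMonic_add_div q z
    set r := q %ₘ z with hr
    set q1 := q /ₘ z with hq1
    have hrdeg : r.degree < 2 := by
      simpa [z_degree] using degree_modByMonic_lt q z_monic
    have hrform : r = C (r.coeff 1) * X + C (r.coeff 0) :=
      eq_X_add_C_of_degree_le_one (by exact Order.le_of_lt_succ (by exact_mod_cast hrdeg))
    -- invariance equation
    have hzc : z.comp (X+1) = z := by rw [hz]; exact z_comp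
    have hcomp : r.comp (X+1) + z * q1.comp (X+1) = q := by
      calc r.comp (X+1) + z * q1.comp (X+1)
          = (r + z * q1).comp (X+1) := by rw [add_comp, mul_comp, hzc]
        _ = q := by rw [hdiv, hq]
    have hrcomp : r.comp (X+1) = r + C (r.coeff 1) := by
      rw [hrform]; simp [add_comp, mul_comp, X_comp]; ring
    have hkey : z * (q1.comp (X+1) - q1) + C (r.coeff 1) = 0 := by
      have := hcomp
      rw [hrcomp] at this
      have h2 := hdiv
      linear_combination this - h2
    have hq1inv : q1.comp (X+1) = q1 := by
      by_contra hne
      have hs : q1.comp (X+1) - q1 ≠ 0 := sub_ne_zero.mpr hne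
      have hdeg1 : (z * (q1.comp (X+1) - q1)).degree ≥ 2 := by
        rw [degree_mul, z_degree]
        have := Polynomial.zero_le_degree_iff.mpr hs
        exact le_add_of_nonneg_right this |>.trans_eq (by ring_nf)
      have hdeg2 : (z * (q1.comp (X+1) - q1)).degree ≤ 0 := by
        have : z * (q1.comp (X+1) - q1) = - C (r.coeff 1) := by linear_combination hkey
        rw [this, degree_neg]
        exact degree_C_le
      exact absurd (hdeg1.trans hdeg2) (by norm_num)
    have hd0 : r.coeff 1 = 0 := by
      have : C (r.coeff 1) = 0 := by
        have := hkey; rw [hq1inv] at this; simpa using this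
      exact C_eq_zero.mp this
    by_cases hq10 : q1 = 0
    · rw [← hdiv, hq10, mul_zero, add_zero, hrform, hd0]
      simpa using (show C (r.coeff 0) ∈ Algebra.adjoin (ZMod 2) ({z} : Set ((ZMod 2)[X])) by
        rw [← Polynomial.algebraMap_eq]; exact Subalgebra.algebraMap_mem _ (r.coeff 0))
    · have hlt : q1.natDegree < n := by
        rw [← hn, ← hdiv]
        have hdegz : (z * q1).degree = 2 + q1.degree := by rw [degree_mul, z_degree]
        have h1 : r.degree < (z * q1).degree := by
          rw [hdegz]
          refine hrdeg.trans_le ?_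
          have := Polynomial.zero_le_degree_iff.mpr hq10
          exact le_add_of_nonneg_right this
        rw [add_comm, natDegree_add_eq_left_of_degree_lt h1]
        have : (z * q1).natDegree = 2 + q1.natDegree := by
          rw [natDegree_mul (z_monic.ne_zero) hq10]
          simp [natDegree_eq_of_degree_eq_some z_degree]
        omega
      have hmem := ih q1.natDegree hlt q1 hq1inv rfl
      rw [← hdiv, hrform, hd0]
      have hzmem : z ∈ Algebra.adjoin (ZMod 2) ({X^2+X} : Set ((ZMod 2)[X])) :=
        Algebra.subset_adjoin rfl
      have hc : C (r.coeff 0) ∈ Algebra.adjoin (ZMod 2) ({X^2+X} : Set ((ZMod 2)[X])) := by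
        rw [← Polynomial.algebraMap_eq]; exact Subalgebra.algebraMap_mem _ (r.coeff 0)
      simpa using add_mem (by simpa using hc) (mul_mem hzmem hmem)

/-- Theorem: over `R = ℤ/4ℤ`, if `f` is nilpotent, `β(x) = -x + 1 + f` and `β` has order 2,
then the ring of invariants of `⟨β⟩` is `R[y + x·f]` where `y = x·(-x+1)`. -/
theorem zmod4_beta_f_order_two_invariants (f : (ZMod 4)[X]) (hf : IsNilpotent f)
    (β : (ZMod 4)[X] ≃ₐ[ZMod 4] (ZMod 4)[X]) (hβ : β X = -X + 1 + f)
    (hord : orderOf β = 2) :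
    {g : (ZMod 4)[X] | ∀ σ ∈ Subgroup.zpowers β, σ g = g} =
      (Algebra.adjoin (ZMod 4)
        ({X * (-X + 1) + X * f} : Set ((ZMod 4)[X])) : Set ((ZMod 4)[X])) := by
  have hβ2 : β ^ 2 = 1 := by rw [← hord]; exact pow_orderOf_eq_one β
  have hββX : β (β X) = X := by
    have h := congrArg (fun σ : (ZMod 4)[X] ≃ₐ[ZMod 4] (ZMod 4)[X] => σ X) hβ2
    simpa [pow_two, AlgEquiv.mul_apply] using h
  set w : (ZMod 4)[X] := X * (-X + 1) + X * f with hwdef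
  have hw : w = X * β X := by rw [hβ, hwdef]; ring
  have hβw : β w = w := by rw [hw, map_mul, hββX, mul_comm]
  set A := Algebra.adjoin (ZMod 4) ({w} : Set ((ZMod 4)[X])) with hA
  -- every element of A is fixed by β
  have hfix : ∀ p ∈ A, β p = p := by
    intro p hp
    induction hp using Algebra.adjoin_induction with
    | mem x hx => rcases hx with rfl; exact hβw
    | algebraMap r => exact β.commutes r
    | add x y hx hy ihx ihy => rw [map_add, ihx, ihy]
    | mul x y hx hy ihx ihy => rw [map_mul, ihx, ihy]
  -- fixed by β implies fixed by all zpowers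
  have invp : ∀ p : (ZMod 4)[X], β p = p → ∀ σ ∈ Subgroup.zpowers β, σ p = p := by
    intro p hp σ hσ
    obtain ⟨k, rfl⟩ := hσ
    have hnat : ∀ m : ℕ, (β ^ m) p = p := by
      intro m; induction m with
      | zero => simp
      | succ m ihm => rw [pow_succ, AlgEquiv.mul_apply, hp, ihm]
    rcases k with m | m
    · simpa using hnat m
    · show (β ^ (Int.negSucc m)) p = p
      rw [zpow_negSucc]
      apply (β ^ (m+1)).injective
      rw [← AlgEquiv.mul_apply, mul_inv_cancel, hnat (m+1)]
      simp
  -- π f = 0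
  have hπf : piQ f = 0 := (hf.map piQ).eq_zero
  have hπf' : Polynomial.map (ZMod.castHom two_dvd_four (ZMod 2)) f = 0 := by
    simpa using hπf
  -- -X = X over ZMod 2
  have hnegX : (-X : (ZMod 2)[X]) = X := by
    rw [neg_eq_iff_add_eq_zero, ← two_mul, poly2_two, zero_mul]
  -- commutation: π ∘ β = (comp (X+1)) ∘ π
  have hcomm : ∀ p : (ZMod 4)[X], piQ (β p) = (piQ p).comp (X + 1) := by
    have heq : piQ.comp (β : (ZMod 4)[X] →+* (ZMod 4)[X]) =
        (eval₂RingHom (C : ZMod 2 →+* (ZMod 2)[X]) (X + 1)).comp piQ := by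
      apply ringHom_ext
      · intro a
        simp [RingHom.comp_apply]
        have : β (C a) = C a := by
          have := β.commutes a
          simpa [Polynomial.algebraMap_eq] using this
        rw [this]
        simp [coe_eval₂RingHom]
      · simp only [RingHom.comp_apply, RingHom.coe_coe, hβ]
        simp [coe_eval₂RingHom, hπf', hnegX]
    intro p
    have := congrArg (fun φ : (ZMod 4)[X] →+* (ZMod 2)[X] => φ p) heq
    simpa [RingHom.comp_apply, coe_eval₂RingHom, Polynomial.comp] using this
  -- π w = X^2 + X
  have hπw : piQ w = X ^ 2 + X := by
    rw [hwdef]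
    simp only [map_add, map_mul, map_neg, map_one, Polynomial.coe_mapRingHom,
      Polynomial.map_X, hπf]
    rw [hnegX]; ring
  -- lifting from adjoin over ZMod 2 to A
  have hlift : ∀ q ∈ Algebra.adjoin (ZMod 2) ({X ^ 2 + X} : Set ((ZMod 2)[X])),
      ∃ p ∈ A, piQ p = q := by
    intro q hq
    induction hq using Algebra.adjoin_induction with
    | mem x hx =>
      rcases hx with rfl
      exact ⟨w, Algebra.subset_adjoin rfl, hπw⟩
    | algebraMap r =>
      obtain ⟨a, ha⟩ : ∃ a : ZMod 4, ZMod.castHom two_dvd_four (ZMod 2) a = r := by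
        revert r; decide
      refine ⟨C a, ?_, ?_⟩
      · have : (C a : (ZMod 4)[X]) = algebraMap (ZMod 4) ((ZMod 4)[X]) a := by
          simp [Polynomial.algebraMap_eq]
        rw [this]; exact Subalgebra.algebraMap_mem _ a
      · simp [Polynomial.algebraMap_eq, ha]
    | add x y hx hy ihx ihy =>
      obtain ⟨p1, hp1, he1⟩ := ihx
      obtain ⟨p2, hp2, he2⟩ := ihy
      exact ⟨p1 + p2, add_mem hp1 hp2, by rw [map_add, he1, he2]⟩
    | mul x y hx hy ihx ihy =>
      obtain ⟨p1, hp1, he1⟩ := ihx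
      obtain ⟨p2, hp2, he2⟩ := ihy
      exact ⟨p1 * p2, mul_mem hp1 hp2, by rw [map_mul, he1, he2]⟩
  ext g
  simp only [Set.mem_setOf_eq, SetLike.mem_coe]
  constructor
  · intro hg
    have hβg : β g = g := hg β (Subgroup.mem_zpowers β)
    have hπg_inv : (piQ g).comp (X + 1) = piQ g := by rw [← hcomm g, hβg]
    obtain ⟨p, hpA, hpq⟩ := hlift _ (fixed2 _ hπg_inv)
    have hgp0 : piQ (g - p) = 0 := by rw [map_sub, hpq, sub_self]
    obtain ⟨u, hu⟩ := pi_ker _ hgp0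
    have hβp : β p = p := hfix p hpA
    have h2 : 2 * (β u - u) = 0 := by
      have h3 : β (2 * u) = 2 * u := by rw [← hu, map_sub, hβg, hβp]
      rw [map_mul, map_ofNat] at h3
      linear_combination h3
    have hπu_inv : (piQ u).comp (X + 1) = piQ u := by
      rw [← hcomm u]
      have h4 := (pi_zero_iff _).mpr h2
      rw [map_sub, sub_eq_zero] at h4
      rw [h4]
    obtain ⟨p', hp'A, hp'q⟩ := hlift _ (fixed2 _ hπu_inv)
    have hup0 : piQ (u - p') = 0 := by rw [map_sub, hp'q, sub_self]
    have h5 : 2 * (u - p') = 0 := (pi_zero_iff _).mp hup0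
    have hgfinal : g = p + 2 * p' := by linear_combination hu + h5
    rw [hgfinal]
    exact add_mem hpA (by rw [two_mul]; exact add_mem hp'A hp'A)
  · intro hg σ hσ
    exact invp g (hfix g hg) σ hσ
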